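/- Let f : ℍ → ℍ be a surjective ℝ-linear isometry of the real quaternions whose determinant as an ℝ-linear map equals 1. Then there exist unit quaternions q₁ and q₂ such that f(x) = q₁ · x · q₂⁻¹ for all x ∈ ℍ. -/

import Mathlib

open Quaternion RealInnerProductSpace

noncomputable def Q (a b c d : ℝ) : Quaternion ℝ := ⟨a,b,c,d⟩
noncomputable def qI : Quaternion ℝ := ⟨0,1,0,0⟩
noncomputable def qJ : Quaternion ℝ := ⟨0,0,1,0⟩
noncomputable def qK : Quaternion ℝ := ⟨0,0,0,1⟩

@[simp] lemma lit_mul_lit (a₁ a₂ a₃ a₄ b₁ b₂ b₃ b₄ : ℝ) :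
    (@HMul.hMul (Quaternion ℝ) (Quaternion ℝ) (Quaternion ℝ) _ ⟨a₁,a₂,a₃,a₄⟩ ⟨b₁,b₂,b₃,b₄⟩) =
      (⟨a₁*b₁ - a₂*b₂ - a₃*b₃ - a₄*b₄, a₁*b₂ + a₂*b₁ + a₃*b₄ - a₄*b₃,
        a₁*b₃ - a₂*b₄ + a₃*b₁ + a₄*b₂, a₁*b₄ + a₂*b₃ - a₃*b₂ + a₄*b₁⟩ : Quaternion ℝ) :=
  Quaternion.ext _ _ (Quaternion.re_mul _ _) (Quaternion.imI_mul _ _) (Quaternion.imJ_mul _ _)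
    (Quaternion.imK_mul _ _)

@[simp] lemma lit_mul_var (a₁ a₂ a₃ a₄ : ℝ) (x : Quaternion ℝ) :
    (@HMul.hMul (Quaternion ℝ) (Quaternion ℝ) (Quaternion ℝ) _ ⟨a₁,a₂,a₃,a₄⟩ x) =
      (⟨a₁*x.re - a₂*x.imI - a₃*x.imJ - a₄*x.imK, a₁*x.imI + a₂*x.re + a₃*x.imK - a₄*x.imJ,
        a₁*x.imJ - a₂*x.imK + a₃*x.re + a₄*x.imI, a₁*x.imK + a₂*x.imJ - a₃*x.imI + a₄*x.re⟩ :
        Quaternion ℝ) :=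
  Quaternion.ext _ _ (Quaternion.re_mul _ _) (Quaternion.imI_mul _ _) (Quaternion.imJ_mul _ _)
    (Quaternion.imK_mul _ _)

@[simp] lemma var_mul_lit (b₁ b₂ b₃ b₄ : ℝ) (x : Quaternion ℝ) :
    (@HMul.hMul (Quaternion ℝ) (Quaternion ℝ) (Quaternion ℝ) _ x ⟨b₁,b₂,b₃,b₄⟩) =
      (⟨x.re*b₁ - x.imI*b₂ - x.imJ*b₃ - x.imK*b₄, x.re*b₂ + x.imI*b₁ + x.imJ*b₄ - x.imK*b₃,
        x.re*b₃ - x.imI*b₄ + x.imJ*b₁ + x.imK*b₂, x.re*b₄ + x.imI*b₃ - x.imJ*b₂ + x.imK*b₁⟩ :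
        Quaternion ℝ) :=
  Quaternion.ext _ _ (Quaternion.re_mul _ _) (Quaternion.imI_mul _ _) (Quaternion.imJ_mul _ _)
    (Quaternion.imK_mul _ _)

@[simp] lemma normSq_lit (a₁ a₂ a₃ a₄ : ℝ) :
    normSq (⟨a₁,a₂,a₃,a₄⟩ : Quaternion ℝ) = a₁^2 + a₂^2 + a₃^2 + a₄^2 :=
  Quaternion.normSq_def' _

@[simp] lemma mulLeft_lit (u : Quaternion ℝ) (a₁ a₂ a₃ a₄ : ℝ) :
    LinearMap.mulLeft ℝ u ⟨a₁,a₂,a₃,a₄⟩ =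
      @HMul.hMul (Quaternion ℝ) (Quaternion ℝ) (Quaternion ℝ) _ u ⟨a₁,a₂,a₃,a₄⟩ := rfl

@[simp] lemma mulRight_lit (u : Quaternion ℝ) (a₁ a₂ a₃ a₄ : ℝ) :
    LinearMap.mulRight ℝ u ⟨a₁,a₂,a₃,a₄⟩ =
      @HMul.hMul (Quaternion ℝ) (Quaternion ℝ) (Quaternion ℝ) _ ⟨a₁,a₂,a₃,a₄⟩ u := rfl

noncomputable def B : Module.Basis (Fin 4) ℝ (Quaternion ℝ) := QuaternionAlgebra.basisOneIJK (-1) 0 (-1)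

lemma B_apply (n : Fin 4) : B n = ![(1:Quaternion ℝ), qI, qJ, qK] n := by
  have : B n = (QuaternionAlgebra.linearEquivTuple (-1:ℝ) 0 (-1)).symm (Pi.single n 1) :=
    congrFun (Module.Basis.coe_ofEquivFun (QuaternionAlgebra.linearEquivTuple (-1:ℝ) 0 (-1))) n
  rw [this]
  ext <;> fin_cases n <;>
    simp [qI, qJ, qK, QuaternionAlgebra.equivTuple, Pi.single_apply]

lemma B_repr (q : Quaternion ℝ) (n : Fin 4) : B.repr q n = ![q.re, q.imI, q.imJ, q.imK] n :=
  congrFun (QuaternionAlgebra.coe_basisOneIJK_repr (c₁ := (-1:ℝ)) (c₂ := (0:ℝ)) (c₃ := (-1:ℝ)) q) n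

lemma det_formula (g : Quaternion ℝ →ₗ[ℝ] Quaternion ℝ) :
    LinearMap.det g = Matrix.det
      !![(g 1).re, (g qI).re, (g qJ).re, (g qK).re;
         (g 1).imI, (g qI).imI, (g qJ).imI, (g qK).imI;
         (g 1).imJ, (g qI).imJ, (g qJ).imJ, (g qK).imJ;
         (g 1).imK, (g qI).imK, (g qJ).imK, (g qK).imK] := by
  rw [← LinearMap.det_toMatrix B g]
  congr 1
  ext i j
  rw [LinearMap.toMatrix_apply, B_apply, B_repr]
  fin_cases i <;> fin_cases j <;> rfl

lemma det_mulLeft (u : Quaternion ℝ) :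
    LinearMap.det (LinearMap.mulLeft ℝ u) = (normSq u)^2 := by
  rw [det_formula]
  simp [qI, qJ, qK, Matrix.det_succ_row_zero, Fin.sum_univ_succ, Quaternion.re_mul,
    Quaternion.imI_mul, Quaternion.imJ_mul, Quaternion.imK_mul, normSq_def', Fin.succAbove,
    Matrix.cons_val_succ, show ((2:Fin 3).castSucc : Fin 4) = 2 from rfl]
  ring

lemma det_mulRight (u : Quaternion ℝ) :
    LinearMap.det (LinearMap.mulRight ℝ u) = (normSq u)^2 := by
  rw [det_formula]
  simp [qI, qJ, qK, Matrix.det_succ_row_zero, Fin.sum_univ_succ, Quaternion.re_mul,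
    Quaternion.imI_mul, Quaternion.imJ_mul, Quaternion.imK_mul, normSq_def', Fin.succAbove,
    Matrix.cons_val_succ, show ((2:Fin 3).castSucc : Fin 4) = 2 from rfl]
  ring

lemma det_so2 (g : Quaternion ℝ →ₗ[ℝ] Quaternion ℝ) (h1 : g 1 = 1) (hI : g qI = qI)
    (hJre : (g qJ).re = 0) (hJI : (g qJ).imI = 0)
    (hKre : (g qK).re = 0) (hKI : (g qK).imI = 0) :
    LinearMap.det g = (g qJ).imJ * (g qK).imK - (g qJ).imK * (g qK).imJ := by
  rw [det_formula, h1, hI]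
  simp [qI, Matrix.det_succ_row_zero, Fin.sum_univ_succ, hJre, hJI, hKre, hKI, Fin.succAbove,
    Matrix.cons_val_succ, show ((2:Fin 3).castSucc : Fin 4) = 2 from rfl]
  ring

lemma inner_formula (x y : Quaternion ℝ) :
    ⟪x, y⟫ = x.re*y.re + x.imI*y.imI + x.imJ*y.imJ + x.imK*y.imK := by
  rw [Quaternion.inner_def]
  simp [Quaternion.re_mul]

lemma inner_isom (g : Quaternion ℝ →ₗ[ℝ] Quaternion ℝ) (h : ∀ x, ‖g x‖ = ‖x‖)
    (x y : Quaternion ℝ) : ⟪g x, g y⟫ = ⟪x, y⟫ :=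
  LinearIsometry.inner_map_map ⟨g, h⟩ x y

lemma norm_one_of_normSq_one {x : Quaternion ℝ} (h : normSq x = 1) : ‖x‖ = 1 := by
  have h2 := Quaternion.normSq_eq_norm_mul_self x
  rw [h] at h2
  nlinarith [norm_nonneg x]

lemma normSq_of_norm_one {x : Quaternion ℝ} (h : ‖x‖ = 1) :
    x.re^2 + x.imI^2 + x.imJ^2 + x.imK^2 = 1 := by
  have := Quaternion.normSq_eq_norm_mul_self x
  rw [h, mul_one] at this
  rw [← Quaternion.normSq_def', this]

lemma step_p1 {a : Quaternion ℝ} (h0 : a.re = 0) (h1 : ‖a‖ = 1) :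
    ∃ p : Quaternion ℝ, ‖p‖ = 1 ∧ p * qI = a * p := by
  have hn := normSq_of_norm_one h1
  rw [h0] at hn
  by_cases ha : a = ⟨0,-1,0,0⟩
  · refine ⟨qJ, norm_one_of_normSq_one (by simp [qJ, normSq_def']), ?_⟩
    rw [ha]
    ext <;> simp [qI, qJ, Quaternion.re_mul, Quaternion.imI_mul, Quaternion.imJ_mul,
      Quaternion.imK_mul]
  · set p₀ : Quaternion ℝ := ⟨1 + a.imI, 0, -a.imK, a.imJ⟩ with hp₀
    have hkey : p₀ * qI = a * p₀ := by
      ext <;> simp [hp₀, qI, Quaternion.re_mul, Quaternion.imI_mul, Quaternion.imJ_mul,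
        Quaternion.imK_mul, h0] <;> nlinarith [hn]
    have hne : p₀ ≠ 0 := by
      intro hz
      apply ha
      have h1 : (1 : ℝ) + a.imI = 0 := congrArg QuaternionAlgebra.re hz
      have h3 : -a.imK = 0 := congrArg QuaternionAlgebra.imJ hz
      have h4 : a.imJ = 0 := congrArg QuaternionAlgebra.imK hz
      ext <;> simp [h0] <;> linarith
    have hnorm : ‖p₀‖ ≠ 0 := norm_ne_zero_iff.2 hne
    refine ⟨‖p₀‖⁻¹ • p₀, ?_, ?_⟩
    · rw [norm_smul, norm_inv, norm_norm, inv_mul_cancel₀ hnorm]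
    · rw [Algebra.smul_mul_assoc, Algebra.mul_smul_comm, hkey]

lemma step_p2 {c s : ℝ} (h : c^2 + s^2 = 1) :
    ∃ p : Quaternion ℝ, ‖p‖ = 1 ∧
      p * qI = qI * p ∧
      Q 0 0 c s * p = p * qJ ∧
      Q 0 0 (-s) c * p = p * qK := by
  have hh : ∃ α β : ℝ, α^2 + β^2 = 1 ∧ α^2 - β^2 = c ∧ 2*α*β = s := by
    by_cases hc : c = -1
    · refine ⟨0, 1, by norm_num, by rw [hc]; ring, ?_⟩
      have hs : s = 0 := by nlinarith [sq_nonneg s]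
      rw [hs]; ring
    · have hc1 : -1 ≤ c := by nlinarith [sq_nonneg s]
      have hc2 : 0 < 1 + c := by
        rcases lt_or_eq_of_le hc1 with h' | h'
        · linarith
        · exact absurd h'.symm hc
      set α := Real.sqrt ((1+c)/2) with hαdef
      have hα2 : α^2 = (1+c)/2 := Real.sq_sqrt (by linarith)
      have hαpos : 0 < α := Real.sqrt_pos.2 (by linarith)
      have hβ : (s/(2*α))^2 = (1-c)/2 := by
        rw [div_pow, mul_pow, hα2]
        have hss : s^2 = (1+c)*(1-c) := by nlinarith
        rw [hss]; field_simp
      refine ⟨α, s/(2*α), ?_, ?_, ?_⟩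
      · rw [hβ, hα2]; ring
      · rw [hβ, hα2]; ring
      · field_simp
  obtain ⟨α, β, h1, h2, h3⟩ := hh
  refine ⟨Q α β 0 0, norm_one_of_normSq_one (by simp [Q, normSq_def']; linarith), ?_, ?_, ?_⟩ <;>
      ext <;>
      simp [Q, qI, qJ, qK, Quaternion.re_mul, Quaternion.imI_mul, Quaternion.imJ_mul,
        Quaternion.imK_mul] <;>
      first
        | linear_combination α*h1 - α*h2 - β*h3
        | linear_combination β*h1 + β*h2 - α*h3
        | linear_combination -(β*h1) - β*h2 + α*h3

set_option maxHeartbeats 1000000 in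
/-- Let `f : ℍ → ℍ` be a surjective `ℝ`-linear isometry of the real
quaternions whose determinant as an `ℝ`-linear map equals `1`.  Then there exist unit
quaternions `q₁` and `q₂` such that `f x = q₁ · x · q₂⁻¹` for all `x ∈ ℍ`. -/
theorem stmt_15 (f : Quaternion ℝ →ₗ[ℝ] Quaternion ℝ)
    (hsurj : Function.Surjective f)
    (hisom : ∀ x : Quaternion ℝ, ‖f x‖ = ‖x‖)
    (hdet : LinearMap.det f = 1) :
    ∃ q₁ q₂ : Quaternion ℝ, ‖q₁‖ = 1 ∧ ‖q₂‖ = 1 ∧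
      ∀ x : Quaternion ℝ, f x = q₁ * x * q₂⁻¹ := by
  set q : Quaternion ℝ := f 1 with hqdef
  have hq : ‖q‖ = 1 := by rw [hqdef, hisom, norm_one]
  have hq0 : q ≠ 0 := by intro h; rw [h, norm_zero] at hq; norm_num at hq
  set g : Quaternion ℝ →ₗ[ℝ] Quaternion ℝ := (LinearMap.mulLeft ℝ q⁻¹) ∘ₗ f with hgdef
  have hgapp : ∀ x, g x = q⁻¹ * f x := fun x => rfl
  have hg1 : g 1 = 1 := by rw [hgapp, ← hqdef, inv_mul_cancel₀ hq0]
  have hgnorm : ∀ x, ‖g x‖ = ‖x‖ := by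
    intro x
    rw [hgapp, norm_mul, norm_inv, hq, hisom, inv_one, one_mul]
  have hgdet : LinearMap.det g = 1 := by
    rw [hgdef, LinearMap.det_comp, det_mulLeft, hdet, mul_one, map_inv₀]
    have : normSq q = 1 := by rw [Quaternion.normSq_eq_norm_mul_self, hq]; norm_num
    rw [this]; norm_num
  -- normalize g i
  have hIim : qI.re = 0 := rfl
  have haI : (g qI).re = 0 := by
    have := inner_isom g hgnorm qI 1
    rw [hg1] at this
    rw [inner_formula, inner_formula] at this
    simpa [qI] using this
  have haInorm : ‖g qI‖ = 1 := by
    rw [hgnorm]; exact norm_one_of_normSq_one (by simp [qI, normSq_def'])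
  obtain ⟨p₁, hp₁, hp₁I⟩ := step_p1 haI haInorm
  have hp₁0 : p₁ ≠ 0 := by intro h; rw [h, norm_zero] at hp₁; norm_num at hp₁
  set g₂ : Quaternion ℝ →ₗ[ℝ] Quaternion ℝ :=
    (LinearMap.mulRight ℝ p₁) ∘ₗ (LinearMap.mulLeft ℝ p₁⁻¹) ∘ₗ g with hg₂def
  have hg₂app : ∀ x, g₂ x = p₁⁻¹ * g x * p₁ := fun x => rfl
  have hg₂1 : g₂ 1 = 1 := by
    rw [hg₂app, hg1, mul_one, inv_mul_cancel₀ hp₁0]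
  have hg₂I : g₂ qI = qI := by
    rw [hg₂app, mul_assoc, ← hp₁I, ← mul_assoc, inv_mul_cancel₀ hp₁0, one_mul]
  have hg₂norm : ∀ x, ‖g₂ x‖ = ‖x‖ := by
    intro x
    rw [hg₂app, norm_mul, norm_mul, norm_inv, hp₁, hgnorm, inv_one, one_mul, mul_one]
  have hg₂det : LinearMap.det g₂ = 1 := by
    have hnp : normSq p₁ = 1 := by rw [Quaternion.normSq_eq_norm_mul_self, hp₁]; norm_num
    rw [hg₂def, LinearMap.det_comp, LinearMap.det_comp, det_mulRight, det_mulLeft, hgdet,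
      map_inv₀, hnp]
    norm_num
  -- coordinates of g₂ J and g₂ K
  have hinner2 := inner_isom g₂ hg₂norm
  have hJnorm : (qJ : Quaternion ℝ).re^2 + qJ.imI^2 + qJ.imJ^2 + qJ.imK^2 = 1 := by
    simp [qJ]
  have hwre : (g₂ qJ).re = 0 := by
    have := hinner2 qJ 1
    rw [hg₂1, inner_formula, inner_formula] at this
    simpa [qJ] using this
  have hwI : (g₂ qJ).imI = 0 := by
    have := hinner2 qJ qI
    rw [hg₂I, inner_formula, inner_formula] at this
    simpa [qI, qJ] using this
  have hvre : (g₂ qK).re = 0 := by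
    have := hinner2 qK 1
    rw [hg₂1, inner_formula, inner_formula] at this
    simpa [qK] using this
  have hvI : (g₂ qK).imI = 0 := by
    have := hinner2 qK qI
    rw [hg₂I, inner_formula, inner_formula] at this
    simpa [qI, qK] using this
  set c : ℝ := (g₂ qJ).imJ with hc
  set s : ℝ := (g₂ qJ).imK with hs
  set c' : ℝ := (g₂ qK).imJ with hc'
  set s' : ℝ := (g₂ qK).imK with hs'
  have hw1 : c^2 + s^2 = 1 := by
    have h2 := normSq_of_norm_one (x := g₂ qJ)
      (by rw [hg₂norm]; exact norm_one_of_normSq_one (by simp [qJ, normSq_def']))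
    rw [hwre, hwI] at h2
    linarith [h2]
  have hv1 : c'^2 + s'^2 = 1 := by
    have h2 := normSq_of_norm_one (x := g₂ qK)
      (by rw [hg₂norm]; exact norm_one_of_normSq_one (by simp [qK, normSq_def']))
    rw [hvre, hvI] at h2
    linarith [h2]
  have horth : c*c' + s*s' = 0 := by
    have := hinner2 qJ qK
    rw [inner_formula, inner_formula, hwre, hwI, hvre, hvI] at this
    simpa [hc, hs, hc', hs', qJ, qK] using this
  have hdet2 : c*s' - s*c' = 1 := by
    rw [det_so2 g₂ hg₂1 hg₂I hwre hwI hvre hvI] at hg₂det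
    linarith [hg₂det]
  have hcc : c' = -s ∧ s' = c := by
    constructor <;> nlinarith [hw1, hv1, horth, hdet2, sq_nonneg (c'+s), sq_nonneg (s'-c)]
  -- get p₂
  obtain ⟨p₂, hp₂, hp₂I, hp₂J, hp₂K⟩ := step_p2 hw1
  have hp₂0 : p₂ ≠ 0 := by intro h; rw [h, norm_zero] at hp₂; norm_num at hp₂
  have hwval : g₂ qJ = Q 0 0 c s := by
    ext <;> simp [Q, hwre, hwI, hc, hs]
  have hvval : g₂ qK = Q 0 0 (-s) c := by
    ext <;> simp [Q, hvre, hvI, ← hc', ← hs', hcc.1, hcc.2]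
  -- the conjugating quaternion
  set p : Quaternion ℝ := p₁ * p₂ with hpdef
  have hp : ‖p‖ = 1 := by rw [hpdef, norm_mul, hp₁, hp₂, one_mul]
  have hp0 : p ≠ 0 := by intro h; rw [h, norm_zero] at hp; norm_num at hp
  -- key identity on the basis
  have hkey : ∀ x, g x * p = p * x := by
    have heq : (LinearMap.mulRight ℝ p) ∘ₗ g = LinearMap.mulLeft ℝ p := by
      apply B.ext
      intro n
      rw [B_apply]
      fin_cases n
      · show g 1 * p = p * 1
        rw [hg1, one_mul, mul_one]
      · show g qI * p = p * qI
        rw [hpdef, ← mul_assoc, ← hp₁I, mul_assoc, ← hp₂I, ← mul_assoc]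
      · show g qJ * p = p * qJ
        have h1 : g qJ * p₁ = p₁ * g₂ qJ := by
          rw [hg₂app, ← mul_assoc, ← mul_assoc, mul_inv_cancel₀ hp₁0, one_mul]
        rw [hpdef, ← mul_assoc, h1, mul_assoc, hwval, hp₂J, ← mul_assoc]
      · show g qK * p = p * qK
        have h1 : g qK * p₁ = p₁ * g₂ qK := by
          rw [hg₂app, ← mul_assoc, ← mul_assoc, mul_inv_cancel₀ hp₁0, one_mul]
        rw [hpdef, ← mul_assoc, h1, mul_assoc, hvval, hp₂K, ← mul_assoc]
    intro x
    exact LinearMap.congr_fun heq x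
  refine ⟨q * p, p, by rw [norm_mul, hq, hp, one_mul], hp, ?_⟩
  intro x
  have h1 : f x = q * g x := by
    rw [hgapp, ← mul_assoc, mul_inv_cancel₀ hq0, one_mul]
  have h2 : g x = p * x * p⁻¹ := by
    rw [← hkey, mul_assoc, mul_inv_cancel₀ hp0, mul_one]
  rw [h1, h2, ← mul_assoc, ← mul_assoc]
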